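/- Let k ≥ 1 and n ≥ 3k − 1 be integers. Let x, y ∈ ℤ² with x ≠ y, with 3k − n < d(x,y) ≤ k, and such that π_n(B_{ℤ²}[x,k] ∩ B_{ℤ²}[y,k]) = π_n(B_{ℤ²}[x,k]) ∩ π_n(B_{ℤ²}[y,k]). Then every facet τ of VR(ℤ²/G_n;k) containing both [x] and [y] is of the form τ = π_n(σ) for some facet σ of VR(ℤ²;k). -/
import Mathlib


/-- The ℓ¹ metric on `ℤ × ℤ`. -/
def dZ2 (x y : ℤ × ℤ) : ℤ := |x.1 - y.1| + |x.2 - y.2|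

/-- `σ` is a simplex of the Vietoris–Rips complex `VR(V; k)` of the metric space `V`
with (integer-valued) distance `d`: a finite nonempty subset of diameter at most `k`. -/
def IsVRSimplex {V : Type*} (d : V → V → ℤ) (k : ℤ) (σ : Finset V) : Prop :=
  σ.Nonempty ∧ ∀ x ∈ σ, ∀ y ∈ σ, d x y ≤ k

/-- `σ` is a facet (maximal simplex) of the Vietoris–Rips complex `VR(V; k)`. -/
def IsVRFacet {V : Type*} (d : V → V → ℤ) (k : ℤ) (σ : Finset V) : Prop :=
  IsVRSimplex d k σ ∧ ∀ τ : Finset V, IsVRSimplex d k τ → σ ⊆ τ → σ = τ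

/-- The circular metric on `ZMod n` (shortest-path metric of the cycle graph `C_n`). -/
def cZdist (n : ℕ) (x y : ZMod n) : ℤ := min ((x - y).val : ℤ) ((y - x).val : ℤ)

/-- The ℓ¹ (quotient) metric on the `n × n` torus grid `T_{n,n} = ℤ²/G_n`,
realized on `ZMod n × ZMod n`. -/
def tdist (n : ℕ) (x y : ZMod n × ZMod n) : ℤ := cZdist n x.1 y.1 + cZdist n x.2 y.2

/-- The quotient map `π_n : ℤ² → ℤ²/G_n`, where `G_n = nℤ × nℤ` and the quotient
is realized as `ZMod n × ZMod n`. -/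
def proj (n : ℕ) (x : ℤ × ℤ) : ZMod n × ZMod n := ((x.1 : ZMod n), (x.2 : ZMod n))

/-- The closed ball `B_{ℤ²}[x, k]` in `ℤ²` with the ℓ¹ metric. -/
def ballZ2 (x : ℤ × ℤ) (k : ℤ) : Set (ℤ × ℤ) := {z | dZ2 x z ≤ k}

/-- Auxiliary: sign cases for a multiple of a positive natural number. -/
lemma VR_mul_cases (n : ℕ) (hn : 0 < n) (e : ℤ) :
    ((n:ℤ) * e ≤ -(n:ℤ)) ∨ ((n:ℤ) * e = 0) ∨ ((n:ℤ) * e = n) ∨ (2 * (n:ℤ) ≤ n * e) := by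
  have hn' : (0:ℤ) < n := by exact_mod_cast hn
  rcases lt_trichotomy e 0 with h|h|h
  · left; nlinarith
  · right; left; simp [h]
  · rcases lt_trichotomy e 1 with h1|h1|h1
    · omega
    · right; right; left; rw [h1, mul_one]
    · right; right; right; nlinarith

/-- Master structural lemma for the circle metric on lifts. -/
lemma cZ_master (n : ℕ) (hn : 0 < n) (z w : ℤ) :
    0 ≤ cZdist n ↑z ↑w ∧ 2 * cZdist n ↑z ↑w ≤ (n:ℤ) ∧
      ((n:ℤ) ∣ (z - w) - cZdist n ↑z ↑w ∨ (n:ℤ) ∣ (z - w) + cZdist n ↑z ↑w) := by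
  haveI : NeZero n := ⟨hn.ne'⟩
  have hn' : (0:ℤ) < n := by exact_mod_cast hn
  have h1 : ((z : ZMod n) - w) = ((z - w : ℤ) : ZMod n) := by push_cast; ring
  have h2 : ((w : ZMod n) - z) = ((-(z - w) : ℤ) : ZMod n) := by push_cast; ring
  unfold cZdist
  rw [h1, h2, ZMod.val_intCast, ZMod.val_intCast]
  set d := z - w with hd
  have e1 : (n:ℤ) * (d / n) + d % n = d := Int.mul_ediv_add_emod d n
  have e2 : (n:ℤ) * ((-d) / n) + (-d) % n = -d := Int.mul_ediv_add_emod (-d) n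
  have r1nn : 0 ≤ d % n := Int.emod_nonneg d hn'.ne'
  have r2nn : 0 ≤ (-d) % n := Int.emod_nonneg (-d) hn'.ne'
  have r1lt : d % n < n := Int.emod_lt_of_pos d hn'
  have r2lt : (-d) % n < n := Int.emod_lt_of_pos (-d) hn'
  have hsum : d % n + (-d) % n = (n:ℤ) * (-(d / n) - ((-d) / n)) := by
    linear_combination e1 + e2
  have hsum2 : d % n + (-d) % n = 0 ∨ d % n + (-d) % n = n := by
    rcases VR_mul_cases n hn (-(d / n) - ((-d) / n)) with h|h|h|h <;> omega
  refine ⟨le_min r1nn r2nn, ?_, ?_⟩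
  · rcases min_cases (d % n) ((-d) % n) with ⟨hm, _⟩|⟨hm, _⟩ <;> omega
  · rcases min_cases (d % n) ((-d) % n) with ⟨hm, _⟩|⟨hm, _⟩
    · left; rw [hm]; exact ⟨d / n, by linarith⟩
    · right; rw [hm]; exact ⟨-((-d) / n), by linarith⟩

/-- Main inequalities for the circle metric on lifts. -/
lemma cZ_main (n : ℕ) (hn : 0 < n) (z w : ℤ) :
    0 ≤ cZdist n ↑z ↑w ∧ cZdist n ↑z ↑w ≤ |z - w| ∧
      (|z - w| = cZdist n ↑z ↑w ∨ (n:ℤ) ≤ |z - w| + cZdist n ↑z ↑w) := by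
  obtain ⟨h0, h2n, hdvd⟩ := cZ_master n hn z w
  rw [Int.abs_eq_natAbs]
  rcases hdvd with ⟨e, he⟩|⟨e, he⟩ <;>
  · have := VR_mul_cases n hn e
    omega

/-- The circle distance is realized by some lift. -/
lemma cZ_lift (n : ℕ) (hn : 0 < n) (x : ℤ) (a : ZMod n) :
    ∃ z : ℤ, (z : ZMod n) = a ∧ |x - z| = cZdist n ↑x a := by
  haveI : NeZero n := ⟨hn.ne'⟩
  obtain ⟨w, rfl⟩ : ∃ w : ℤ, (w : ZMod n) = a :=
    ⟨(a.val : ℤ), by rw [Int.cast_natCast, ZMod.natCast_val, ZMod.cast_id]⟩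
  obtain ⟨h0, h2n, hdvd⟩ := cZ_master n hn x w
  rcases hdvd with ⟨e, he⟩|⟨e, he⟩
  · refine ⟨x - cZdist n ↑x ↑w, ?_, ?_⟩
    · rw [ZMod.intCast_eq_intCast_iff]
      exact Int.modEq_iff_dvd.mpr ⟨-e, by linear_combination -he⟩
    · rw [show x - (x - cZdist n ↑x ↑w) = cZdist n ↑x ↑w by ring]
      exact abs_of_nonneg h0
  · refine ⟨x + cZdist n ↑x ↑w, ?_, ?_⟩
    · rw [ZMod.intCast_eq_intCast_iff]
      exact Int.modEq_iff_dvd.mpr ⟨-e, by linear_combination -he⟩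
    · rw [show x - (x + cZdist n ↑x ↑w) = -cZdist n ↑x ↑w by ring, abs_neg]
      exact abs_of_nonneg h0

/-- The torus distance is realized by some lift. -/
lemma tdist_lift (n : ℕ) (hn : 0 < n) (x : ℤ × ℤ) (t : ZMod n × ZMod n) :
    ∃ z : ℤ × ℤ, proj n z = t ∧ dZ2 x z = tdist n (proj n x) t := by
  obtain ⟨z1, hz1, h1⟩ := cZ_lift n hn x.1 t.1
  obtain ⟨z2, hz2, h2⟩ := cZ_lift n hn x.2 t.2
  exact ⟨(z1, z2), by simp [proj, hz1, hz2, Prod.ext_iff],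
    by simp only [dZ2, tdist, proj]; rw [h1, h2]⟩

/-- The projection is 1-Lipschitz. -/
lemma tdist_le_dZ2 (n : ℕ) (hn : 0 < n) (z w : ℤ × ℤ) :
    tdist n (proj n z) (proj n w) ≤ dZ2 z w := by
  have h1 := (cZ_main n hn z.1 w.1).2.1
  have h2 := (cZ_main n hn z.2 w.2).2.1
  simp only [tdist, proj, dZ2]
  exact add_le_add h1 h2

/-- Key geometric lemma: for points in the intersection of the two balls, distances
in `ℤ²` agree with torus distances (no wrap-around is possible). -/
lemma noWrap (k : ℤ) (n : ℕ) (hk : 1 ≤ k) (hn : 3 * k - 1 ≤ (n:ℤ))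
    (x y z w : ℤ × ℤ) (hd1 : 3 * k - (n:ℤ) < dZ2 x y)
    (hxz : dZ2 x z ≤ k) (hyz : dZ2 y z ≤ k) (hxw : dZ2 x w ≤ k) (hyw : dZ2 y w ≤ k)
    (ht : tdist n (proj n z) (proj n w) ≤ k) :
    dZ2 z w = tdist n (proj n z) (proj n w) := by
  have hn0 : 0 < n := by omega
  obtain ⟨c1n, c1le, c1or⟩ := cZ_main n hn0 z.1 w.1
  obtain ⟨c2n, c2le, c2or⟩ := cZ_main n hn0 z.2 w.2
  simp only [dZ2, tdist, proj] at *
  simp only [Int.abs_eq_natAbs] at *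
  omega

/-- Every simplex of `VR(ℤ²; k)` is contained in a facet. -/
lemma exists_facet (k : ℤ) (σ₀ : Finset (ℤ × ℤ)) (h : IsVRSimplex dZ2 k σ₀) :
    ∃ σ : Finset (ℤ × ℤ), IsVRFacet dZ2 k σ ∧ σ₀ ⊆ σ := by
  classical
  obtain ⟨⟨z₀, hz₀⟩, hdiam⟩ := h
  set B : Finset (ℤ × ℤ) := Finset.Icc (z₀.1 - k, z₀.2 - k) (z₀.1 + k, z₀.2 + k) with hB
  have hmemB : ∀ w : ℤ × ℤ, dZ2 z₀ w ≤ k → w ∈ B := by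
    intro w hw
    simp only [hB, Finset.mem_Icc, Prod.mk_le_mk]
    simp only [dZ2] at hw
    have h3 := le_abs_self (z₀.1 - w.1); have h4 := neg_abs_le (z₀.1 - w.1)
    have h5 := le_abs_self (z₀.2 - w.2); have h6 := neg_abs_le (z₀.2 - w.2)
    have h1 := abs_nonneg (z₀.1 - w.1); have h2 := abs_nonneg (z₀.2 - w.2)
    constructor <;> constructor <;> dsimp only <;> linarith
  have hmono : ∀ s : Finset (ℤ × ℤ), IsVRSimplex dZ2 k s → z₀ ∈ s → s ⊆ B := by
    intro s hs hz w hw; exact hmemB w (hs.2 z₀ hz w hw)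
  set S := B.powerset.filter (fun s => IsVRSimplex dZ2 k s ∧ σ₀ ⊆ s) with hS
  have hσ₀S : σ₀ ∈ S := by
    simp only [hS, Finset.mem_filter, Finset.mem_powerset]
    exact ⟨hmono σ₀ ⟨⟨z₀, hz₀⟩, hdiam⟩ hz₀, ⟨⟨z₀, hz₀⟩, hdiam⟩, Finset.Subset.refl σ₀⟩
  obtain ⟨σ, hσS, hmax⟩ := S.exists_max_image Finset.card ⟨σ₀, hσ₀S⟩
  simp only [hS, Finset.mem_filter, Finset.mem_powerset] at hσS
  obtain ⟨hσB, hσsimp, hσ₀σ⟩ := hσS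
  refine ⟨σ, ⟨hσsimp, ?_⟩, hσ₀σ⟩
  intro τ hτ hστ
  have hz₀τ : z₀ ∈ τ := hστ (hσ₀σ hz₀)
  have hτS : τ ∈ S := by
    simp only [hS, Finset.mem_filter, Finset.mem_powerset]
    exact ⟨hmono τ hτ hz₀τ, hτ, hσ₀σ.trans hστ⟩
  exact Finset.eq_of_subset_of_card_le hστ (hmax τ hτS)

theorem stmt6 (k : ℤ) (n : ℕ) (hk : 1 ≤ k) (hn : 3 * k - 1 ≤ (n : ℤ))
    (x y : ℤ × ℤ) (hxy : x ≠ y)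
    (hd1 : 3 * k - (n : ℤ) < dZ2 x y) (hd2 : dZ2 x y ≤ k)
    (hball : proj n '' (ballZ2 x k ∩ ballZ2 y k)
      = proj n '' ballZ2 x k ∩ proj n '' ballZ2 y k)
    (τ : Finset (ZMod n × ZMod n)) (hτ : IsVRFacet (tdist n) k τ)
    (hxτ : proj n x ∈ τ) (hyτ : proj n y ∈ τ) :
    ∃ σ : Finset (ℤ × ℤ), IsVRFacet dZ2 k σ ∧ τ = σ.image (proj n) := by
  classical
  have hn0 : 0 < n := by omega
  obtain ⟨⟨hτne, hτdiam⟩, hτmax⟩ := hτ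
  -- every element of τ lifts into the intersection of the two balls
  have hlift : ∀ t ∈ τ, ∃ z : ℤ × ℤ, proj n z = t ∧ dZ2 x z ≤ k ∧ dZ2 y z ≤ k := by
    intro t htτ
    have hx' : t ∈ proj n '' ballZ2 x k := by
      obtain ⟨z, hz, hzd⟩ := tdist_lift n hn0 x t
      refine ⟨z, ?_, hz⟩
      simp only [ballZ2, Set.mem_setOf_eq]
      rw [hzd]
      exact hτdiam _ hxτ _ htτ
    have hy' : t ∈ proj n '' ballZ2 y k := by
      obtain ⟨z, hz, hzd⟩ := tdist_lift n hn0 y t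
      refine ⟨z, ?_, hz⟩
      simp only [ballZ2, Set.mem_setOf_eq]
      rw [hzd]
      exact hτdiam _ hyτ _ htτ
    have hmem : t ∈ proj n '' (ballZ2 x k ∩ ballZ2 y k) := by
      rw [hball]; exact ⟨hx', hy'⟩
    obtain ⟨z, ⟨hz1, hz2⟩, hz3⟩ := hmem
    exact ⟨z, hz3, hz1, hz2⟩
  set f : ZMod n × ZMod n → ℤ × ℤ := fun t =>
    if h : ∃ z : ℤ × ℤ, proj n z = t ∧ dZ2 x z ≤ k ∧ dZ2 y z ≤ k then h.choose
    else (0, 0) with hf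
  have hfspec : ∀ t ∈ τ, proj n (f t) = t ∧ dZ2 x (f t) ≤ k ∧ dZ2 y (f t) ≤ k := by
    intro t ht
    have h := hlift t ht
    simp only [hf, dif_pos h]
    exact h.choose_spec
  set σ₀ := τ.image f with hσ₀
  have hσ₀simplex : IsVRSimplex dZ2 k σ₀ := by
    constructor
    · exact hτne.image f
    · intro a ha b hb
      simp only [hσ₀, Finset.mem_image] at ha hb
      obtain ⟨t, ht, rfl⟩ := ha; obtain ⟨t', ht', rfl⟩ := hb
      have h1 := hfspec t ht; have h2 := hfspec t' ht'
      have hle : tdist n (proj n (f t)) (proj n (f t')) ≤ k := by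
        rw [h1.1, h2.1]; exact hτdiam t ht t' ht'
      rw [noWrap k n hk hn x y (f t) (f t') hd1 h1.2.1 h1.2.2 h2.2.1 h2.2.2 hle]
      exact hle
  obtain ⟨σ, hσfacet, hσ₀σ⟩ := exists_facet k σ₀ hσ₀simplex
  have himg : σ₀.image (proj n) = τ := by
    apply Finset.ext; intro t
    simp only [hσ₀, Finset.image_image, Finset.mem_image, Function.comp]
    constructor
    · rintro ⟨t', ht', rfl⟩; rw [(hfspec t' ht').1]; exact ht'
    · intro ht; exact ⟨t, ht, (hfspec t ht).1⟩
  have hsub : σ.image (proj n) ⊆ τ := by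
    have hhelper : ∀ t ∈ τ, ∀ w ∈ σ,
        tdist n t (proj n w) ≤ k ∧ tdist n (proj n w) t ≤ k := by
      intro t ht w hw
      have hft : f t ∈ σ := hσ₀σ (Finset.mem_image_of_mem f ht)
      constructor
      · rw [← (hfspec t ht).1]
        exact le_trans (tdist_le_dZ2 n hn0 (f t) w) (hσfacet.1.2 _ hft _ hw)
      · rw [← (hfspec t ht).1]
        exact le_trans (tdist_le_dZ2 n hn0 w (f t)) (hσfacet.1.2 _ hw _ hft)
    have hunion : IsVRSimplex (tdist n) k (τ ∪ σ.image (proj n)) := by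
      constructor
      · exact hτne.mono Finset.subset_union_left
      · intro a ha b hb
        rw [Finset.mem_union] at ha hb
        rcases ha with ha|ha <;> rcases hb with hb|hb
        · exact hτdiam a ha b hb
        · obtain ⟨w, hw, rfl⟩ := Finset.mem_image.mp hb
          exact (hhelper a ha w hw).1
        · obtain ⟨w, hw, rfl⟩ := Finset.mem_image.mp ha
          exact (hhelper b hb w hw).2
        · obtain ⟨w, hw, rfl⟩ := Finset.mem_image.mp ha
          obtain ⟨w', hw', rfl⟩ := Finset.mem_image.mp hb
          exact le_trans (tdist_le_dZ2 n hn0 w w') (hσfacet.1.2 _ hw _ hw')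
    have heq := hτmax _ hunion Finset.subset_union_left
    intro t ht
    rw [heq]
    exact Finset.mem_union_right _ ht
  refine ⟨σ, hσfacet, ?_⟩
  apply Finset.Subset.antisymm
  · rw [← himg]; exact Finset.image_subset_image hσ₀σ
  · exact hsub
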